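/- For any Hermitian operator X on a finite-dimensional Hilbert space, the quantity max over operators M with 0 ≤ M ≤ I of |Tr(M X)| equals (1/2)|Tr X| + (1/2)‖X‖₁, where ‖X‖₁ is the trace norm. -/

import Mathlib

open Matrix
open scoped ComplexOrder

section helpers
variable {n : Type*} [Fintype n] [DecidableEq n]

lemma tn_conj_trace (U : Matrix n n ℂ) (hU : star U * U = 1) (d : n → ℂ) :
    (U * diagonal d * star U).trace = ∑ i, d i := by
  rw [trace_mul_cycle, hU, one_mul, trace_diagonal]

lemma tn_conj_mul (U : Matrix n n ℂ) (hU : star U * U = 1) (d e : n → ℂ) :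
    (U * diagonal d * star U) * (U * diagonal e * star U)
      = U * diagonal (fun i => d i * e i) * star U := by
  calc U * diagonal d * star U * (U * diagonal e * star U)
      = U * diagonal d * (star U * U) * diagonal e * star U := by simp only [mul_assoc]
    _ = U * (diagonal d * diagonal e) * star U := by rw [hU, mul_one]; simp only [mul_assoc]
    _ = U * diagonal (fun i => d i * e i) * star U := by rw [diagonal_mul_diagonal]

lemma tn_trace_mul_diag (A : Matrix n n ℂ) (d : n → ℂ) :
    (A * diagonal d).trace = ∑ i, A i i * d i := by
  simp [Matrix.trace, Matrix.diag, mul_diagonal]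

lemma tn_diag_nonneg {A : Matrix n n ℂ} (hA : A.PosSemidef) (i : n) : 0 ≤ A i i := by
  exact hA.diag_nonneg

lemma tn_conj_psd (U : Matrix n n ℂ) {s : n → ℝ} (hs : ∀ i, 0 ≤ s i) :
    (U * diagonal (fun i => (s i : ℂ)) * star U).PosSemidef := by
  rw [Matrix.star_eq_conjTranspose]
  exact (PosSemidef.diagonal (fun i => by
    simpa using Complex.zero_le_real.mpr (hs i))).mul_mul_conjTranspose_same U

end helpers

/-- The Schatten 1-norm (trace norm) of a complex matrix: `Tr √(XᴴX)`. -/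
noncomputable def traceNorm {n : Type*} [Fintype n] [DecidableEq n] (X : Matrix n n ℂ) : ℝ :=
  (((Matrix.posSemidef_conjTranspose_mul_self X).1.eigenvectorUnitary : Matrix n n ℂ) *
    diagonal (fun i => ((Real.sqrt ((Matrix.posSemidef_conjTranspose_mul_self X).1.eigenvalues i) : ℝ) : ℂ)) *
    (star (Matrix.posSemidef_conjTranspose_mul_self X).1.eigenvectorUnitary : Matrix n n ℂ)).trace.re

/-- For any Hermitian matrix `X`, the maximum of `|Tr (M X)|` over all `M` with
`0 ≤ M ≤ I` equals `(1/2)|Tr X| + (1/2)‖X‖₁`. -/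
theorem max_abs_trace_eq_half_trace_add_half_traceNorm
    {n : Type*} [Fintype n] [DecidableEq n] (X : Matrix n n ℂ) (hX : X.IsHermitian) :
    IsGreatest {r : ℝ | ∃ M : Matrix n n ℂ, M.PosSemidef ∧ (1 - M).PosSemidef ∧
        r = ‖(M * X).trace‖}
      ((1 / 2) * ‖X.trace‖ + (1 / 2) * traceNorm X) := by
  classical
  set U : Matrix n n ℂ := (hX.eigenvectorUnitary : Matrix n n ℂ) with hUdef
  have hUU : star U * U = 1 := mem_unitaryGroup_iff'.mp hX.eigenvectorUnitary.2
  have hUU' : U * star U = 1 := mem_unitaryGroup_iff.mp hX.eigenvectorUnitary.2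
  set lam := hX.eigenvalues with hlamdef
  have hspec : X = U * diagonal (fun i => (lam i : ℂ)) * star U := by
    simpa [Function.comp_def] using hX.spectral_theorem
  set P : ℝ := ∑ i, max (lam i) 0 with hPdef
  set N : ℝ := ∑ i, max (-lam i) 0 with hNdef
  have hPnn : 0 ≤ P := Finset.sum_nonneg fun i _ => le_max_right _ _
  have hNnn : 0 ≤ N := Finset.sum_nonneg fun i _ => le_max_right _ _
  -- trace of X
  have htr : X.trace = ((∑ i, lam i : ℝ) : ℂ) := by
    rw [hspec, tn_conj_trace U hUU]; norm_cast
  -- trace norm of X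
  have habs : traceNorm X = ∑ i, |lam i| := by
    have hpsd : (Xᴴ * X).PosSemidef := posSemidef_conjTranspose_mul_self X
    have hS : (U * diagonal (fun i => ((|lam i| : ℝ) : ℂ)) * star U).PosSemidef :=
      tn_conj_psd U (fun i => abs_nonneg _)
    have hsq : (U * diagonal (fun i => ((|lam i| : ℝ) : ℂ)) * star U) ^ 2 = Xᴴ * X := by
      rw [pow_two, tn_conj_mul U hUU, hX.eq, hspec, tn_conj_mul U hUU]
      have hf : (fun i => ((|lam i| : ℝ) : ℂ) * ((|lam i| : ℝ) : ℂ))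
          = fun i => ((lam i : ℝ) : ℂ) * ((lam i : ℝ) : ℂ) := by
        funext i; rw [← Complex.ofReal_mul, ← Complex.ofReal_mul, abs_mul_abs_self]
      rw [hf]
    have hsa : IsSelfAdjoint X := hX
    have e1 : traceNorm X = (cfc Real.sqrt (Xᴴ * X)).trace.re := by
      rw [(posSemidef_conjTranspose_mul_self X).1.cfc_eq]; rfl
    have e2 : Xᴴ * X = cfc (fun x : ℝ => x * x) X := by
      rw [cfc_mul (fun x : ℝ => x) (fun x => x) X, cfc_id' ℝ X, hX.eq]
    have e3 : cfc Real.sqrt (cfc (fun x : ℝ => x * x) X) = cfc (fun x : ℝ => |x|) X := by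
      rw [← cfc_comp Real.sqrt (fun x : ℝ => x * x) X]
      exact cfc_congr fun x _ => Real.sqrt_mul_self_eq_abs x
    rw [e1, e2, e3, hX.cfc_eq]
    show ((U * diagonal (fun i => ((|lam i| : ℝ) : ℂ)) * star U).trace).re = _
    rw [tn_conj_trace U hUU, ← Complex.ofReal_sum]
    exact Complex.ofReal_re _
  have hsum1 : ∑ i, lam i = P - N := by
    rw [hPdef, hNdef, ← Finset.sum_sub_distrib]
    refine Finset.sum_congr rfl fun i _ => ?_
    rcases le_total 0 (lam i) with h | h
    · rw [max_eq_left h, max_eq_right (by linarith)]; ring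
    · rw [max_eq_right h, max_eq_left (by linarith)]; ring
  have hsum2 : ∑ i, |lam i| = P + N := by
    rw [hPdef, hNdef, ← Finset.sum_add_distrib]
    refine Finset.sum_congr rfl fun i _ => ?_
    rcases le_total 0 (lam i) with h | h
    · rw [abs_of_nonneg h, max_eq_left h, max_eq_right (by linarith)]; ring
    · rw [abs_of_nonpos h, max_eq_right h, max_eq_left (by linarith)]; ring
  have hval : (1 / 2) * ‖X.trace‖ + (1 / 2) * traceNorm X = max P N := by
    rw [htr, habs, Complex.norm_real, Real.norm_eq_abs, hsum1, hsum2]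
    rcases le_total N P with h | h
    · rw [max_eq_left h, abs_of_nonneg (by linarith)]; ring
    · rw [max_eq_right h, abs_of_nonpos (by linarith)]; ring
  -- generic membership
  have hmem : ∀ s : n → ℝ, (∀ i, 0 ≤ s i) → (∀ i, s i ≤ 1) →
      |∑ i, s i * lam i| ∈ {r : ℝ | ∃ M : Matrix n n ℂ, M.PosSemidef ∧ (1 - M).PosSemidef ∧
        r = ‖(M * X).trace‖} := by
    intro s h0 h1
    refine ⟨U * diagonal (fun i => ((s i : ℝ) : ℂ)) * star U, tn_conj_psd U h0, ?_, ?_⟩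
    · have key : (1 : Matrix n n ℂ) - U * diagonal (fun i => ((s i : ℝ) : ℂ)) * star U
          = U * diagonal (fun i => ((1 - s i : ℝ) : ℂ)) * star U := by
        have hd : (diagonal (fun i => ((1 - s i : ℝ) : ℂ)) : Matrix n n ℂ)
            = 1 - diagonal (fun i => ((s i : ℝ) : ℂ)) := by
          ext i j
          by_cases h : i = j <;> simp [h, diagonal_apply, Matrix.one_apply]
        rw [hd, mul_sub, mul_one, sub_mul, hUU']
      rw [key]
      exact tn_conj_psd U (fun i => by linarith [h1 i])
    · rw [hspec, tn_conj_mul U hUU, tn_conj_trace U hUU]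
      have : ∑ i, ((s i : ℝ) : ℂ) * ((lam i : ℝ) : ℂ) = ((∑ i, s i * lam i : ℝ) : ℂ) := by
        norm_cast
      rw [this, Complex.norm_real, Real.norm_eq_abs]
  constructor
  · -- membership
    rw [Set.mem_setOf_eq] at *
    rw [hval]
    rcases le_total N P with h | h
    · have hsum : ∑ i, (fun i => if 0 ≤ lam i then (1:ℝ) else 0) i * lam i = P := by
        refine Finset.sum_congr rfl fun i _ => ?_
        by_cases hi : 0 ≤ lam i
        · simp [hi, max_eq_left hi]
        · simp [hi, max_eq_right (le_of_lt (lt_of_not_ge hi))]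
      have heq : max P N = |∑ i, (fun i => if 0 ≤ lam i then (1:ℝ) else 0) i * lam i| := by
        rw [hsum, abs_of_nonneg hPnn, max_eq_left h]
      rw [heq]
      exact hmem _ (fun i => by split <;> norm_num) (fun i => by split <;> norm_num)
    · have hsum : ∑ i, (fun i => if lam i ≤ 0 then (1:ℝ) else 0) i * lam i = -N := by
        rw [hNdef, ← Finset.sum_neg_distrib]
        refine Finset.sum_congr rfl fun i _ => ?_
        by_cases hi : lam i ≤ 0
        · simp [hi, max_eq_left (by linarith : (0:ℝ) ≤ -lam i)]
        · simp [hi, max_eq_right (by linarith [lt_of_not_ge hi] : -lam i ≤ 0)]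
      have heq : max P N = |∑ i, (fun i => if lam i ≤ 0 then (1:ℝ) else 0) i * lam i| := by
        rw [hsum, abs_neg, abs_of_nonneg hNnn, max_eq_right h]
      rw [heq]
      exact hmem _ (fun i => by split <;> norm_num) (fun i => by split <;> norm_num)
  · -- upper bound
    rintro r ⟨M, hM, h1M, rfl⟩
    rw [hval]
    set A := star U * M * U with hAdef
    have hApsd : A.PosSemidef := by
      exact hM.conjTranspose_mul_mul_same U
    have h1Apsd : (1 - A).PosSemidef := by
      have h := h1M.conjTranspose_mul_mul_same U
      have e : Uᴴ * (1 - M) * U = 1 - A := by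
        rw [hAdef, Matrix.star_eq_conjTranspose, mul_sub, mul_one, sub_mul,
          ← Matrix.star_eq_conjTranspose, hUU]
      rwa [e] at h
    have haim : ∀ i, A i i = (((A i i).re : ℝ) : ℂ) := by
      intro i
      have h0 := tn_diag_nonneg hApsd i
      have him : (A i i).im = 0 := by
        have := (Complex.le_def.mp h0).2
        simpa using this.symm
      exact (Complex.ext (by simp) (by simp [him])).symm
    have hare : ∀ i, 0 ≤ (A i i).re ∧ (A i i).re ≤ 1 := by
      intro i
      have h0 := tn_diag_nonneg hApsd i
      have h1 := tn_diag_nonneg h1Apsd i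
      have h1' : (A i i).re ≤ 1 := by
        have := (Complex.le_def.mp h1).1
        simp only [Matrix.sub_apply, Matrix.one_apply_eq, Complex.sub_re, Complex.one_re,
          Complex.zero_re] at this
        linarith
      exact ⟨(Complex.le_def.mp h0).1, h1'⟩
    have htrM : (M * X).trace = ((∑ i, (A i i).re * lam i : ℝ) : ℂ) := by
      rw [hspec, ← mul_assoc, ← mul_assoc, trace_mul_cycle, ← mul_assoc, tn_trace_mul_diag,
        Complex.ofReal_sum]
      refine Finset.sum_congr rfl fun i _ => ?_
      rw [Complex.ofReal_mul]
      congr 1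
      exact haim i
    rw [htrM, Complex.norm_real, Real.norm_eq_abs]
    have hub : ∑ i, (A i i).re * lam i ≤ P := by
      refine Finset.sum_le_sum fun i _ => ?_
      rcases le_total 0 (lam i) with h | h
      · rw [max_eq_left h]
        nlinarith [(hare i).1, (hare i).2]
      · rw [max_eq_right h]
        nlinarith [(hare i).1, (hare i).2]
    have hlb : -N ≤ ∑ i, (A i i).re * lam i := by
      rw [hNdef, ← Finset.sum_neg_distrib]
      refine Finset.sum_le_sum fun i _ => ?_
      rcases le_total 0 (lam i) with h | h
      · rw [max_eq_right (by linarith : -lam i ≤ 0)]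
        nlinarith [(hare i).1, (hare i).2]
      · rw [max_eq_left (by linarith : (0:ℝ) ≤ -lam i)]
        nlinarith [(hare i).1, (hare i).2]
    rw [abs_le]
    constructor
    · have : -max P N ≤ -N := by simp [le_max_right]
      linarith
    · exact le_trans hub (le_max_left _ _)
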